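/- Let A ∈ 2^ω be non-computable and let X be 1-generic relative to A. Then X and A are Turing incomparable: X ≰_T A and A ≰_T X. -/

import Mathlib

set_option maxHeartbeats 3000000


open scoped ENNReal

namespace KLS

/-- `f : ℕ →. ℕ` is partial recursive relative to the total oracle `O : ℕ → ℕ`. -/
inductive RecursiveIn (O : ℕ → ℕ) : (ℕ →. ℕ) → Prop
  | zero : RecursiveIn O (pure 0)
  | succ : RecursiveIn O ↑Nat.succ
  | left : RecursiveIn O ↑fun n : ℕ => n.unpair.1
  | right : RecursiveIn O ↑fun n : ℕ => n.unpair.2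
  | oracle : RecursiveIn O ↑O
  | pair {f g} : RecursiveIn O f → RecursiveIn O g →
      RecursiveIn O fun n => Nat.pair <$> f n <*> g n
  | comp {f g} : RecursiveIn O f → RecursiveIn O g →
      RecursiveIn O fun n => g n >>= f
  | prec {f g} : RecursiveIn O f → RecursiveIn O g →
      RecursiveIn O (Nat.unpaired fun a n =>
        n.rec (f a) fun y IH => do let i ← IH; g (Nat.pair a (Nat.pair y i)))
  | rfind {f} : RecursiveIn O f →
      RecursiveIn O fun a => Nat.rfind fun n => (fun m => m = 0) <$> f (Nat.pair a n)

/-- The characteristic function of `X ∈ 2^ω`, as a numeric oracle. -/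
def charFun (X : ℕ → Bool) : ℕ → ℕ := fun n => (X n).toNat

/-- Turing reducibility on Cantor space `2^ω`. -/
def TLE (A B : ℕ → Bool) : Prop :=
  RecursiveIn (charFun B) ↑(charFun A)

/-- Turing equivalence on Cantor space. -/
def TEquiv (A B : ℕ → Bool) : Prop := TLE A B ∧ TLE B A

/-- A set is computable iff it is Turing reducible to the empty set. -/
def ComputableSet (A : ℕ → Bool) : Prop := TLE A fun _ => false

/-- Turing join of two elements of Cantor space. -/
def join (A B : ℕ → Bool) : ℕ → Bool :=
  fun n => if n % 2 = 0 then A (n / 2) else B (n / 2)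

/-- `W ⊆ ℕ` is computably enumerable relative to `A`: it is the domain of a
partial function computable with oracle `A`. -/
def CEIn (A : ℕ → Bool) (W : Set ℕ) : Prop :=
  ∃ f : ℕ →. ℕ, RecursiveIn (charFun A) f ∧ ∀ n, (f n).Dom ↔ n ∈ W

/-- A set of finite binary strings is c.e. relative to `A` (via coding). -/
def CEStrings (A : ℕ → Bool) (W : Set (List Bool)) : Prop :=
  CEIn A (Encodable.encode '' W)

/-- The basic clopen cylinder of all extensions of a finite binary string. -/
def cyl (σ : List Bool) : Set (ℕ → Bool) :=
  {X | ∀ i < σ.length, X i = σ.getD i false}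

/-- The initial segment given by the first `k` bits of `X`. -/
def initSeg (X : ℕ → Bool) (k : ℕ) : List Bool := List.ofFn fun i : Fin k => X i

/-- `X` is 1-generic relative to `A`: for every set `W` of finite binary strings
c.e. in `A`, some initial segment of `X` is in `W` or has no extension in `W`. -/
def OneGenericIn (X A : ℕ → Bool) : Prop :=
  ∀ W : Set (List Bool), CEStrings A W →
    ∃ k, initSeg X k ∈ W ∨ ∀ τ ∈ W, ¬ initSeg X k <+: τ

/-- A sequence of open sets that is uniformly Σ⁰₁ relative to `A`. -/
def Sigma01Seq (A : ℕ → Bool) (U : ℕ → Set (ℕ → Bool)) : Prop :=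
  ∃ W : Set (ℕ × List Bool), CEIn A (Encodable.encode '' W) ∧
    ∀ n, U n = ⋃ σ ∈ {σ | (n, σ) ∈ W}, cyl σ

/-- A doubly indexed family of open sets that is uniformly Σ⁰₁ relative to `A`. -/
def Sigma01Fam (A : ℕ → Bool) (U : ℕ → ℕ → Set (ℕ → Bool)) : Prop :=
  ∃ W : Set (ℕ × ℕ × List Bool), CEIn A (Encodable.encode '' W) ∧
    ∀ e n, U e n = ⋃ σ ∈ {σ | (e, n, σ) ∈ W}, cyl σ

open Classical in
/-- The fair-coin (uniform) outer measure on Cantor space, obtained by the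
Carathéodory construction from the premeasure assigning `2 ^ (-|σ|)` to the
cylinder `cyl σ`. -/
noncomputable def mu : MeasureTheory.OuterMeasure (ℕ → Bool) :=
  MeasureTheory.OuterMeasure.ofFunction
    (fun s => if s = ∅ then 0 else
      ⨅ (σ : List Bool) (_ : s ⊆ cyl σ), (2 : ℝ≥0∞)⁻¹ ^ σ.length)
    (by simp)

/-- `X` is Martin-Löf random relative to `A`. -/
def MLRIn (X A : ℕ → Bool) : Prop :=
  ∀ U : ℕ → Set (ℕ → Bool), Sigma01Seq A U →
    (∀ n, mu (U n) ≤ (2 : ℝ≥0∞)⁻¹ ^ n) → X ∉ ⋂ n, U n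

/-- `X` is weakly 2-random relative to `A`: it avoids every null Π⁰₂(A) class. -/
def W2RIn (X A : ℕ → Bool) : Prop :=
  ∀ U : ℕ → Set (ℕ → Bool), Sigma01Seq A U →
    mu (⋂ n, U n) = 0 → X ∉ ⋂ n, U n

/-- Membership of a binary string in the tree coded by `T ∈ 2^ω`. -/
def inTree (T : ℕ → Bool) (σ : List Bool) : Prop := T (Encodable.encode σ) = true

/-- `T` codes an infinite binary tree: a prefix-closed, infinite set of strings. -/
def InfTree (T : ℕ → Bool) : Prop :=
  (∀ σ τ : List Bool, inTree T τ → σ <+: τ → inTree T σ) ∧ {σ | inTree T σ}.Infinite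

/-- `X` is an infinite path through the tree coded by `T`. -/
def IsPath (X T : ℕ → Bool) : Prop := ∀ k, inTree T (initSeg X k)

/-- A Scott set: nonempty, closed under Turing reducibility and join, and every
infinite binary tree coded in `S` has an infinite path in `S`. -/
structure IsScottSet (S : Set (ℕ → Bool)) : Prop where
  nonempty : S.Nonempty
  red : ∀ X ∈ S, ∀ Y, TLE Y X → Y ∈ S
  joined : ∀ X ∈ S, ∀ Y ∈ S, join X Y ∈ S
  paths : ∀ T ∈ S, InfTree T → ∃ X ∈ S, IsPath X T

/-- An ω-model of WWKL: nonempty, closed under Turing reducibility and join, and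
every Π⁰₁(A) class (for `A ∈ S`) of positive measure has an element in `S`. -/
structure IsWWKLModel (S : Set (ℕ → Bool)) : Prop where
  nonempty : S.Nonempty
  red : ∀ X ∈ S, ∀ Y, TLE Y X → Y ∈ S
  joined : ∀ X ∈ S, ∀ Y ∈ S, join X Y ∈ S
  wwkl : ∀ A ∈ S, ∀ W : Set (List Bool), CEStrings A W →
    mu (⋃ σ ∈ W, cyl σ)ᶜ ≠ 0 → ∃ X ∈ S, X ∈ (⋃ σ ∈ W, cyl σ)ᶜ


open Nat.Partrec (Code)
open Nat.Partrec.Code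

private lemma partrec_recursiveIn {O : ℕ → ℕ} {f : ℕ →. ℕ} (h : Nat.Partrec f) :
    RecursiveIn O f := by
  induction h with
  | zero => exact .zero
  | succ => exact .succ
  | left => exact .left
  | right => exact .right
  | pair _ _ hf hg => exact .pair hf hg
  | comp _ _ hf hg => exact .comp hf hg
  | prec _ _ hf hg => exact .prec hf hg
  | rfind _ hf => exact .rfind hf

private lemma recursiveIn_trans {O h : ℕ → ℕ} {f : ℕ →. ℕ}
    (hf : RecursiveIn h f) (hh : RecursiveIn O ↑h) : RecursiveIn O f := by
  induction hf with
  | zero => exact .zero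
  | succ => exact .succ
  | left => exact .left
  | right => exact .right
  | oracle => exact hh
  | pair _ _ hf hg => exact .pair hf hg
  | comp _ _ hf hg => exact .comp hf hg
  | prec _ _ hf hg => exact .prec hf hg
  | rfind _ hf => exact .rfind hf

private def oseg (O : ℕ → ℕ) (k : ℕ) : List ℕ := List.ofFn fun i : Fin k => O i

private lemma oseg_get? (O : ℕ → ℕ) (k n : ℕ) :
    (oseg O k)[n]? = if n < k then some (O n) else none := by
  simp [oseg, List.getElem?_ofFn]

private lemma oseg_prefix (O : ℕ → ℕ) {k k' : ℕ} (h : k ≤ k') : oseg O k <+: oseg O k' := by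
  obtain ⟨d, rfl⟩ := Nat.exists_eq_add_of_le h
  refine ⟨List.ofFn fun j : Fin d => O (k + j), ?_⟩
  simp [oseg, List.ofFn_add]

private lemma prefix_get? {l l' : List ℕ} (h : l <+: l') {n a : ℕ} (hn : l[n]? = some a) :
    l'[n]? = some a := by
  obtain ⟨t, rfl⟩ := h
  rw [List.getElem?_append_left ((List.getElem?_eq_some_iff.1 hn).1)]
  exact hn


private lemma mem_pbind {α β} {o : Part α} {f : α → Part β} {b : β} :
    b ∈ o >>= f ↔ ∃ a ∈ o, b ∈ f a := by
  rw [Part.bind_eq_bind]; exact Part.mem_bind_iff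

private lemma mem_fmap {α β} {f : α → β} {o : Part α} {b : β} :
    b ∈ f <$> o ↔ ∃ a ∈ o, f a = b := by
  rw [Part.map_eq_map]; exact Part.mem_map_iff f

private lemma mem_pairSeq {p q : Part ℕ} {a : ℕ} :
    a ∈ (Nat.pair <$> p <*> q) ↔ ∃ x ∈ p, ∃ y ∈ q, Nat.pair x y = a := by
  simp [Seq.seq]

private lemma eval_rfindShape (c : Code) :
    eval ((c.rfind').comp (Code.pair Code.id Code.zero)) =
      fun a => Nat.rfind fun n => (fun m => m = 0) <$> eval c (Nat.pair a n) := by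
  simp [eval, Seq.seq, pure, PFun.pure, Part.map_id']
  rfl

private def lookup : ℕ →. ℕ :=
  fun p => Part.ofOption ((Denumerable.ofNat (List ℕ) p.unpair.1)[p.unpair.2]?)

private lemma lookup_partrec : Nat.Partrec lookup := by
  have h : Primrec fun p : ℕ => ((Denumerable.ofNat (List ℕ) p.unpair.1)[p.unpair.2]?) :=
    Primrec.list_getElem?.comp ((Primrec.ofNat (List ℕ)).comp (Primrec.fst.comp Primrec.unpair))
      (Primrec.snd.comp Primrec.unpair)
  exact Partrec.nat_iff.1 (Computable.ofOption h.to_comp)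

private theorem key {O : ℕ → ℕ} {f : ℕ →. ℕ} (h : RecursiveIn O f) :
    ∃ F : List ℕ → Code, Primrec F ∧
      (∀ l l' : List ℕ, l <+: l' → ∀ n a : ℕ, a ∈ eval (F l) n → a ∈ eval (F l') n) ∧
      (∀ k n a : ℕ, a ∈ eval (F (oseg O k)) n → a ∈ f n) ∧
      (∀ n a : ℕ, a ∈ f n → ∃ k, a ∈ eval (F (oseg O k)) n) := by
  induction h with
  | zero =>
    exact ⟨fun _ => Code.zero, Primrec.const _, fun _ _ _ _ _ h => h, fun _ _ _ h => h,
      fun _ _ h => ⟨0, h⟩⟩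
  | succ =>
    exact ⟨fun _ => Code.succ, Primrec.const _, fun _ _ _ _ _ h => h, fun _ _ _ h => h,
      fun _ _ h => ⟨0, h⟩⟩
  | left =>
    exact ⟨fun _ => Code.left, Primrec.const _, fun _ _ _ _ _ h => h, fun _ _ _ h => h,
      fun _ _ h => ⟨0, h⟩⟩
  | right =>
    exact ⟨fun _ => Code.right, Primrec.const _, fun _ _ _ _ _ h => h, fun _ _ _ h => h,
      fun _ _ h => ⟨0, h⟩⟩
  | oracle =>
    obtain ⟨cg, hcg⟩ := exists_code.1 lookup_partrec
    have hev : ∀ (l : List ℕ) (i : ℕ),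
        eval (cg.curry (Encodable.encode l)) i = Part.ofOption (l[i]?) := by
      intro l i
      rw [eval_curry, hcg]
      simp [lookup]
    refine ⟨fun l => cg.curry (Encodable.encode l),
      primrec₂_curry.comp (Primrec.const cg) Primrec.encode, ?_, ?_, ?_⟩
    · intro l l' hp n a ha
      rw [hev, Part.mem_ofOption] at ha ⊢
      exact prefix_get? hp ha
    · intro k n a ha
      rw [hev, Part.mem_ofOption, oseg_get?] at ha
      by_cases hk : n < k
      · rw [if_pos hk] at ha
        cases ha
        simp [PFun.coe_val]
      · rw [if_neg hk] at ha; cases ha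
    · intro n a ha
      simp only [PFun.coe_val, Part.mem_some_iff] at ha
      subst ha
      refine ⟨n + 1, ?_⟩
      rw [hev, Part.mem_ofOption, oseg_get?, if_pos (Nat.lt_succ_self n)]
      rfl
  | pair hf hg ihf ihg =>
    obtain ⟨F, hF, Fmono, Fsound, Fcomp⟩ := ihf
    obtain ⟨G, hG, Gmono, Gsound, Gcomp⟩ := ihg
    refine ⟨fun l => (F l).pair (G l), primrec₂_pair.comp hF hG, ?_, ?_, ?_⟩
    · intro l l' hp n a ha
      simp only [eval] at ha ⊢
      obtain ⟨x, hx, y, hy, rfl⟩ := mem_pairSeq.1 ha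
      exact mem_pairSeq.2 ⟨x, Fmono l l' hp n x hx, y, Gmono l l' hp n y hy, rfl⟩
    · intro k n a ha
      simp only [eval] at ha
      obtain ⟨x, hx, y, hy, rfl⟩ := mem_pairSeq.1 ha
      exact mem_pairSeq.2 ⟨x, Fsound k n x hx, y, Gsound k n y hy, rfl⟩
    · intro n a ha
      obtain ⟨x, hx, y, hy, rfl⟩ := mem_pairSeq.1 ha
      obtain ⟨k₁, hk₁⟩ := Fcomp n x hx
      obtain ⟨k₂, hk₂⟩ := Gcomp n y hy
      refine ⟨max k₁ k₂, ?_⟩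
      simp only [eval]
      exact mem_pairSeq.2 ⟨x, Fmono _ _ (oseg_prefix O (le_max_left _ _)) n x hk₁,
        y, Gmono _ _ (oseg_prefix O (le_max_right _ _)) n y hk₂, rfl⟩
  | comp hf hg ihf ihg =>
    obtain ⟨F, hF, Fmono, Fsound, Fcomp⟩ := ihf
    obtain ⟨G, hG, Gmono, Gsound, Gcomp⟩ := ihg
    refine ⟨fun l => (F l).comp (G l), primrec₂_comp.comp hF hG, ?_, ?_, ?_⟩
    · intro l l' hp n a ha
      simp only [eval] at ha ⊢
      obtain ⟨y, hy, hx⟩ := mem_pbind.1 ha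
      exact mem_pbind.2 ⟨y, Gmono l l' hp n y hy, Fmono l l' hp y a hx⟩
    · intro k n a ha
      simp only [eval] at ha
      obtain ⟨y, hy, hx⟩ := mem_pbind.1 ha
      exact mem_pbind.2 ⟨y, Gsound k n y hy, Fsound k y a hx⟩
    · intro n a ha
      obtain ⟨y, hy, hx⟩ := mem_pbind.1 ha
      obtain ⟨k₁, hk₁⟩ := Gcomp n y hy
      obtain ⟨k₂, hk₂⟩ := Fcomp y a hx
      refine ⟨max k₁ k₂, ?_⟩
      simp only [eval]
      exact mem_pbind.2 ⟨y, Gmono _ _ (oseg_prefix O (le_max_left _ _)) n y hk₁,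
        Fmono _ _ (oseg_prefix O (le_max_right _ _)) y a hk₂⟩
  | @prec fp gp hf hg ihf ihg =>
    obtain ⟨F, hF, Fmono, Fsound, Fcomp⟩ := ihf
    obtain ⟨G, hG, Gmono, Gsound, Gcomp⟩ := ihg
    have cmono : ∀ (l l' : List ℕ), l <+: l' → ∀ (a0 m x : ℕ),
        x ∈ (m.rec (eval (F l) a0) fun y IH =>
          IH >>= fun i => eval (G l) (Nat.pair a0 (Nat.pair y i)) : Part ℕ) →
        x ∈ (m.rec (eval (F l') a0) fun y IH =>
          IH >>= fun i => eval (G l') (Nat.pair a0 (Nat.pair y i)) : Part ℕ) := by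
      intro l l' hp a0 m
      induction m with
      | zero => exact fun x hx => Fmono l l' hp a0 x hx
      | succ m ih =>
        intro x hx
        obtain ⟨i, hi, hgi⟩ := mem_pbind.1 hx
        exact mem_pbind.2 ⟨i, ih i hi, Gmono l l' hp _ x hgi⟩
    have csound : ∀ (k : ℕ) (a0 m x : ℕ),
        x ∈ (m.rec (eval (F (oseg O k)) a0) fun y IH =>
          IH >>= fun i => eval (G (oseg O k)) (Nat.pair a0 (Nat.pair y i)) : Part ℕ) →
        x ∈ (m.rec (fp a0) fun y IH =>
          IH >>= fun i => gp (Nat.pair a0 (Nat.pair y i)) : Part ℕ) := by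
      intro k a0 m
      induction m with
      | zero => exact fun x hx => Fsound k a0 x hx
      | succ m ih =>
        intro x hx
        obtain ⟨i, hi, hgi⟩ := mem_pbind.1 hx
        exact mem_pbind.2 ⟨i, ih i hi, Gsound k _ x hgi⟩
    have ccomp : ∀ (a0 m x : ℕ),
        x ∈ (m.rec (fp a0) fun y IH =>
          IH >>= fun i => gp (Nat.pair a0 (Nat.pair y i)) : Part ℕ) →
        ∃ k, x ∈ (m.rec (eval (F (oseg O k)) a0) fun y IH =>
          IH >>= fun i => eval (G (oseg O k)) (Nat.pair a0 (Nat.pair y i)) : Part ℕ) := by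
      intro a0 m
      induction m with
      | zero => exact fun x hx => Fcomp a0 x hx
      | succ m ih =>
        intro x hx
        obtain ⟨i, hi, hgi⟩ := mem_pbind.1 hx
        obtain ⟨k₁, hk₁⟩ := ih i hi
        obtain ⟨k₂, hk₂⟩ := Gcomp _ x hgi
        refine ⟨max k₁ k₂, mem_pbind.2
          ⟨i, cmono _ _ (oseg_prefix O (le_max_left _ _)) a0 m i hk₁,
           Gmono _ _ (oseg_prefix O (le_max_right _ _)) _ x hk₂⟩⟩
    refine ⟨fun l => (F l).prec (G l), primrec₂_prec.comp hF hG, ?_, ?_, ?_⟩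
    · intro l l' hp n a ha
      simp only [eval, Nat.unpaired] at ha ⊢
      exact cmono l l' hp _ _ a ha
    · intro k n a ha
      simp only [eval, Nat.unpaired] at ha
      simp only [Nat.unpaired]
      exact csound k _ _ a ha
    · intro n a ha
      simp only [Nat.unpaired] at ha
      obtain ⟨k, hk⟩ := ccomp _ _ a ha
      refine ⟨k, ?_⟩
      simp only [eval, Nat.unpaired]
      exact hk
  | rfind hf ihf =>
    obtain ⟨F, hF, Fmono, Fsound, Fcomp⟩ := ihf
    refine ⟨fun l => ((F l).rfind').comp (Code.pair Code.id Code.zero),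
      primrec₂_comp.comp (primrec_rfind'.comp hF) (Primrec.const _), ?_, ?_, ?_⟩
    · intro l l' hp n a ha
      rw [eval_rfindShape] at ha ⊢
      replace ha := Nat.mem_rfind.1 ha
      refine Nat.mem_rfind.2 ?_
      obtain ⟨h1, h2⟩ := ha
      constructor
      · obtain ⟨v, hv, hv0⟩ := mem_fmap.1 h1
        exact mem_fmap.2 ⟨v, Fmono l l' hp _ v hv, hv0⟩
      · intro m hm
        obtain ⟨v, hv, hv0⟩ := mem_fmap.1 (h2 hm)
        exact mem_fmap.2 ⟨v, Fmono l l' hp _ v hv, hv0⟩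
    · intro k n a ha
      rw [eval_rfindShape] at ha
      replace ha := Nat.mem_rfind.1 ha
      refine Nat.mem_rfind.2 ?_
      obtain ⟨h1, h2⟩ := ha
      constructor
      · obtain ⟨v, hv, hv0⟩ := mem_fmap.1 h1
        exact mem_fmap.2 ⟨v, Fsound k _ v hv, hv0⟩
      · intro m hm
        obtain ⟨v, hv, hv0⟩ := mem_fmap.1 (h2 hm)
        exact mem_fmap.2 ⟨v, Fsound k _ v hv, hv0⟩
    · intro n a ha
      replace ha := Nat.mem_rfind.1 ha
      obtain ⟨h1, h2⟩ := ha
      obtain ⟨v, hv, hv0⟩ := mem_fmap.1 h1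
      obtain ⟨k₁, hk₁⟩ := Fcomp _ v hv
      have aux : ∀ j, j ≤ a → ∃ k, ∀ m, m < j →
          (false : Bool) ∈ (fun m => decide (m = 0)) <$> eval (F (oseg O k)) (Nat.pair n m) := by
        intro j
        induction j with
        | zero => exact fun _ => ⟨0, fun m hm => absurd hm (Nat.not_lt_zero m)⟩
        | succ j ihj =>
          intro hj
          obtain ⟨k₂, hk₂⟩ := ihj (Nat.le_of_succ_le hj)
          obtain ⟨w, hw, hw0⟩ := mem_fmap.1 (h2 hj)
          obtain ⟨k₃, hk₃⟩ := Fcomp _ w hw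
          refine ⟨max k₂ k₃, fun m hm => ?_⟩
          rcases Nat.lt_succ_iff_lt_or_eq.1 hm with h | rfl
          · obtain ⟨u, hu, hu0⟩ := mem_fmap.1 (hk₂ m h)
            exact mem_fmap.2
              ⟨u, Fmono _ _ (oseg_prefix O (le_max_left _ _)) _ u hu, hu0⟩
          · exact mem_fmap.2
              ⟨w, Fmono _ _ (oseg_prefix O (le_max_right _ _)) _ w hk₃, hw0⟩
      obtain ⟨k₂, hk₂⟩ := aux a le_rfl
      refine ⟨max k₁ k₂, ?_⟩
      rw [eval_rfindShape]
      refine Nat.mem_rfind.2 ?_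
      refine ⟨mem_fmap.2
        ⟨v, Fmono _ _ (oseg_prefix O (le_max_left _ _)) _ v hk₁, hv0⟩, ?_⟩
      intro m hm
      obtain ⟨u, hu, hu0⟩ := mem_fmap.1 (hk₂ m hm)
      exact mem_fmap.2 ⟨u, Fmono _ _ (oseg_prefix O (le_max_right _ _)) _ u hu, hu0⟩

private lemma ce_helper (O : ℕ → ℕ) {G u : ℕ → ℕ} (hG : Computable G) (hu : Computable u) :
    ∃ f : ℕ →. ℕ, RecursiveIn O f ∧
      ∀ k, (f k).Dom ↔ ∃ t, G (Nat.pair (Nat.pair k t) (O (u (Nat.pair k t)))) = 0 := by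
  set D : ℕ → ℕ := fun p => G (Nat.pair p (O (u p))) with hD
  have hu' : RecursiveIn O ↑u := partrec_recursiveIn (Partrec.nat_iff.1 hu.partrec)
  have hG' : RecursiveIn O ↑G := partrec_recursiveIn (Partrec.nat_iff.1 hG.partrec)
  have hid : RecursiveIn O ↑(fun p : ℕ => p) :=
    partrec_recursiveIn (Partrec.nat_iff.1 Computable.id.partrec)
  have h1 : RecursiveIn O ↑(fun p => O (u p)) := by
    have := RecursiveIn.comp (O := O) .oracle hu'
    have e : (fun n => (↑u : ℕ →. ℕ) n >>= (↑O : ℕ →. ℕ)) = (↑(fun p => O (u p)) : ℕ →. ℕ) := by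
      funext p
      show Part.bind (Part.some (u p)) (fun x => Part.some (O x)) = Part.some (O (u p))
      exact Part.bind_some _ _
    rwa [e] at this
  have h2 : RecursiveIn O ↑(fun p : ℕ => Nat.pair p (O (u p))) := by
    have := RecursiveIn.pair (O := O) hid h1
    have e : (fun n => Nat.pair <$> (↑(fun p : ℕ => p) : ℕ →. ℕ) n <*> (↑(fun p => O (u p)) : ℕ →. ℕ) n)
        = (↑(fun p : ℕ => Nat.pair p (O (u p))) : ℕ →. ℕ) := by
      funext p
      simp [PFun.coe_val, Seq.seq]
    rwa [e] at this
  have h3 : RecursiveIn O ↑D := by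
    have := RecursiveIn.comp (O := O) hG' h2
    have e : (fun n => (↑(fun p : ℕ => Nat.pair p (O (u p))) : ℕ →. ℕ) n >>= (↑G : ℕ →. ℕ)) = (↑D : ℕ →. ℕ) := by
      funext p
      show Part.bind (Part.some (Nat.pair p (O (u p)))) (fun x => Part.some (G x)) = Part.some (D p)
      exact Part.bind_some _ _
    rwa [e] at this
  refine ⟨_, RecursiveIn.rfind h3, ?_⟩
  intro k
  refine Nat.rfind_dom.trans ?_
  constructor
  · rintro ⟨t, ht, -⟩
    refine ⟨t, ?_⟩
    obtain ⟨v, hv, hv0⟩ := mem_fmap.1 ht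
    simp only [PFun.coe_val, Part.mem_some_iff] at hv
    subst hv
    simpa [hD] using of_decide_eq_true hv0
  · rintro ⟨t, ht⟩
    refine ⟨t, ?_, fun {m} _ => ?_⟩
    · refine mem_fmap.2 ⟨D (Nat.pair k t), by simp [PFun.coe_val], ?_⟩
      simp [hD, ht]
    · simp [PFun.coe_val]

private lemma initSeg_length (X : ℕ → Bool) (k : ℕ) : (initSeg X k).length = k := by
  simp [initSeg]

private lemma initSeg_get? (X : ℕ → Bool) (k n : ℕ) :
    (initSeg X k)[n]? = if n < k then some (X n) else none := by
  simp [initSeg, List.getElem?_ofFn]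

private lemma initSeg_getD (X : ℕ → Bool) {i k : ℕ} (h : i < k) :
    (initSeg X k).getD i false = X i := by
  rw [List.getD_eq_getElem?_getD, initSeg_get?, if_pos h]
  rfl

private lemma initSeg_prefix (X : ℕ → Bool) {k k' : ℕ} (h : k ≤ k') :
    initSeg X k <+: initSeg X k' := by
  obtain ⟨d, rfl⟩ := Nat.exists_eq_add_of_le h
  refine ⟨List.ofFn fun j : Fin d => X (k + j), ?_⟩
  simp [initSeg, List.ofFn_add]

private lemma map_initSeg (X : ℕ → Bool) (k : ℕ) :
    (initSeg X k).map Bool.toNat = oseg (charFun X) k := by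
  simp [initSeg, oseg, List.map_ofFn]
  rfl

private lemma toNat_primrec : Primrec Bool.toNat :=
  (Primrec.cond Primrec.id (Primrec.const 1) (Primrec.const 0)).of_eq fun b => by cases b <;> rfl

private lemma not_TLE_left {A X : ℕ → Bool} (hX : OneGenericIn X A) (h : TLE X A) : False := by
  classical
  set W : Set (List Bool) := {σ | ∃ i < σ.length, σ.getD i false ≠ X i} with hWdef
  have hce : CEStrings A W := by
    set G1 : ℕ → ℕ := fun q =>
      Option.casesOn (Encodable.decode₂ (List Bool) q.unpair.1.unpair.1) 1
        (fun σ => if q.unpair.1.unpair.2 < σ.length ∧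
            (σ.getD q.unpair.1.unpair.2 false).toNat ≠ q.unpair.2 then 0 else 1) with hG1def
    have hq1 : Primrec fun q : ℕ => q.unpair.1.unpair.1 :=
      Primrec.fst.comp (Primrec.unpair.comp (Primrec.fst.comp Primrec.unpair))
    have hq2 : Primrec fun q : ℕ => q.unpair.1.unpair.2 :=
      Primrec.snd.comp (Primrec.unpair.comp (Primrec.fst.comp Primrec.unpair))
    have hq3 : Primrec fun q : ℕ => q.unpair.2 := Primrec.snd.comp Primrec.unpair
    have hG1 : Computable G1 := by
      apply Primrec.to_comp
      apply Primrec.option_casesOn (Primrec.decode₂.comp hq1) (Primrec.const 1)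
      apply Primrec.ite ?_ (Primrec.const 0) (Primrec.const 1)
      apply PrimrecPred.and
      · exact Primrec.nat_lt.comp (hq2.comp Primrec.fst) (Primrec.list_length.comp Primrec.snd)
      · exact (Primrec.eq.comp
          (toNat_primrec.comp ((Primrec.list_getD false).comp Primrec.snd (hq2.comp Primrec.fst)))
          (hq3.comp Primrec.fst)).not
    obtain ⟨f, hf, hdom⟩ := ce_helper (charFun X) hG1
      (Primrec.to_comp (Primrec.snd.comp Primrec.unpair))
    refine ⟨f, recursiveIn_trans hf h, ?_⟩
    intro n
    rw [hdom n]
    constructor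
    · rintro ⟨t, ht⟩
      simp only [hG1def, Nat.unpair_pair] at ht
      rcases hd : Encodable.decode₂ (List Bool) n with - | σ
      · rw [hd] at ht; simp at ht
      · rw [hd] at ht
        simp only [Option.casesOn] at ht
        split_ifs at ht with hcond
        · obtain ⟨h1, h2⟩ := hcond
          refine ⟨σ, ⟨t, h1, fun he => h2 ?_⟩, Encodable.mem_decode₂.1 hd⟩
          rw [he]
          rfl
    · rintro ⟨σ, hσ, rfl⟩
      obtain ⟨i, hi, hne⟩ := hσ
      refine ⟨i, ?_⟩
      have hd : Encodable.decode₂ (List Bool) (Encodable.encode σ) = some σ :=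
        Encodable.mem_decode₂.2 rfl
      simp only [hG1def, Nat.unpair_pair, hd]
      rw [if_pos]
      refine ⟨hi, fun he => hne ?_⟩
      have := congrArg (fun x => x = 1) he
      cases hx : σ.getD i false <;> cases hy : X i <;> simp_all [charFun]
  obtain ⟨k, hk⟩ := hX W hce
  rcases hk with hk | hk
  · obtain ⟨i, hi, hne⟩ := hk
    rw [initSeg_length] at hi
    exact hne (initSeg_getD X hi)
  · refine hk (initSeg X k ++ [!X k]) ?_ ⟨[!X k], rfl⟩
    refine ⟨k, ?_, ?_⟩
    · simp [initSeg_length]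
    · have hsome : (initSeg X k ++ [!X k])[k]? = some (!X k) := by
        rw [List.getElem?_append_right (le_of_eq (initSeg_length X k))]
        simp [initSeg_length]
      rw [List.getD_eq_getElem?_getD, hsome]
      cases X k <;> simp

private lemma not_TLE_right {A X : ℕ → Bool} (hA : ¬ ComputableSet A)
    (hX : OneGenericIn X A) (h : TLE A X) : False := by
  classical
  obtain ⟨F, hF, Fmono, Fsound, Fcomp⟩ := key h
  set W : Set (List Bool) := {σ | ∃ s n m : ℕ,
      evaln s (F (σ.map Bool.toNat)) n = some m ∧ m ≠ charFun A n} with hWdef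
  have hmapF : Primrec fun σ : List Bool => F (σ.map Bool.toNat) :=
    hF.comp (Primrec.list_map Primrec.id (toNat_primrec.comp Primrec.snd))
  have hce : CEStrings A W := by
    set G2 : ℕ → ℕ := fun q =>
      Option.casesOn (Encodable.decode₂ (List Bool) q.unpair.1.unpair.1) 1
        (fun σ => if evaln q.unpair.1.unpair.2.unpair.1 (F (σ.map Bool.toNat))
              q.unpair.1.unpair.2.unpair.2.unpair.1
              = some q.unpair.1.unpair.2.unpair.2.unpair.2 ∧
            q.unpair.1.unpair.2.unpair.2.unpair.2 ≠ q.unpair.2 then 0 else 1) with hG2def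
    have hq1 : Primrec fun q : ℕ => q.unpair.1.unpair.1 :=
      Primrec.fst.comp (Primrec.unpair.comp (Primrec.fst.comp Primrec.unpair))
    have ht0 : Primrec fun q : ℕ => q.unpair.1.unpair.2 :=
      Primrec.snd.comp (Primrec.unpair.comp (Primrec.fst.comp Primrec.unpair))
    have hqs : Primrec fun q : ℕ => q.unpair.1.unpair.2.unpair.1 :=
      Primrec.fst.comp (Primrec.unpair.comp ht0)
    have hqn : Primrec fun q : ℕ => q.unpair.1.unpair.2.unpair.2.unpair.1 :=
      Primrec.fst.comp (Primrec.unpair.comp (Primrec.snd.comp (Primrec.unpair.comp ht0)))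
    have hqm : Primrec fun q : ℕ => q.unpair.1.unpair.2.unpair.2.unpair.2 :=
      Primrec.snd.comp (Primrec.unpair.comp (Primrec.snd.comp (Primrec.unpair.comp ht0)))
    have hqa : Primrec fun q : ℕ => q.unpair.2 := Primrec.snd.comp Primrec.unpair
    have hG2 : Computable G2 := by
      apply Primrec.to_comp
      apply Primrec.option_casesOn (Primrec.decode₂.comp hq1) (Primrec.const 1)
      apply Primrec.ite ?_ (Primrec.const 0) (Primrec.const 1)
      apply PrimrecPred.and
      · refine Primrec.eq.comp ?_ (Primrec.option_some.comp (hqm.comp Primrec.fst))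
        exact primrec_evaln.comp
          (((hqs.comp Primrec.fst).pair (hmapF.comp Primrec.snd)).pair (hqn.comp Primrec.fst))
      · exact (Primrec.eq.comp (hqm.comp Primrec.fst) (hqa.comp Primrec.fst)).not
    obtain ⟨f, hf, hdom⟩ := ce_helper (charFun A) hG2
      (Primrec.to_comp (Primrec.fst.comp (Primrec.unpair.comp
        (Primrec.snd.comp (Primrec.unpair.comp (Primrec.snd.comp Primrec.unpair))))))
    refine ⟨f, hf, ?_⟩
    intro j
    rw [hdom j]
    constructor
    · rintro ⟨t, ht⟩
      simp only [hG2def, Nat.unpair_pair] at ht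
      rcases hd : Encodable.decode₂ (List Bool) j with - | σ
      · rw [hd] at ht; simp at ht
      · rw [hd] at ht
        simp only [Option.casesOn] at ht
        split_ifs at ht with hcond
        · obtain ⟨h1, h2⟩ := hcond
          exact ⟨σ, ⟨_, _, _, h1, h2⟩, Encodable.mem_decode₂.1 hd⟩
    · rintro ⟨σ, hσ, rfl⟩
      obtain ⟨s, n, m, hev, hne⟩ := hσ
      refine ⟨Nat.pair s (Nat.pair n m), ?_⟩
      have hd : Encodable.decode₂ (List Bool) (Encodable.encode σ) = some σ :=
        Encodable.mem_decode₂.2 rfl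
      simp only [hG2def, Nat.unpair_pair, hd]
      rw [if_pos ⟨hev, hne⟩]
  obtain ⟨k₀, hk⟩ := hX W hce
  rcases hk with hk | hb
  · obtain ⟨s, n, m, hev, hne⟩ := hk
    rw [map_initSeg] at hev
    have h1 : m ∈ eval (F (oseg (charFun X) k₀)) n := evaln_sound hev
    have h2 := Fsound k₀ n m h1
    simp only [PFun.coe_val, Part.mem_some_iff] at h2
    exact hne h2
  · set p : ℕ → ℕ → Bool := fun n t =>
      Option.casesOn (Encodable.decode₂ (List Bool) t.unpair.1) false fun τ =>
        decide (evaln t.unpair.2.unpair.1 (F ((initSeg X k₀ ++ τ).map Bool.toNat)) n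
          = some t.unpair.2.unpair.2) with hpdef
    have hcorrect : ∀ n t, p n t = true → t.unpair.2.unpair.2 = charFun A n := by
      intro n t hpt
      simp only [hpdef] at hpt
      rcases hd : Encodable.decode₂ (List Bool) t.unpair.1 with - | τ
      · rw [hd] at hpt; simp at hpt
      · rw [hd] at hpt
        simp only [Option.casesOn, decide_eq_true_eq] at hpt
        by_contra hne
        exact hb (initSeg X k₀ ++ τ) ⟨_, _, _, hpt, hne⟩ ⟨τ, rfl⟩
    have hexists : ∀ n, ∃ t, p n t = true := by
      intro n
      have hmem : charFun A n ∈ (↑(charFun A) : ℕ →. ℕ) n := by simp [PFun.coe_val]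
      obtain ⟨k₁, hk₁⟩ := Fcomp n _ hmem
      have h1 : charFun A n ∈ eval (F (oseg (charFun X) (max k₁ k₀))) n :=
        Fmono _ _ (oseg_prefix _ (le_max_left _ _)) _ _ hk₁
      obtain ⟨τ, hτ⟩ := initSeg_prefix X (le_max_right k₁ k₀)
      rw [← map_initSeg, ← hτ] at h1
      obtain ⟨s, hs⟩ := evaln_complete.1 h1
      refine ⟨Nat.pair (Encodable.encode τ) (Nat.pair s (charFun A n)), ?_⟩
      have hd : Encodable.decode₂ (List Bool) (Encodable.encode τ) = some τ :=
        Encodable.mem_decode₂.2 rfl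
      simp only [hpdef, Nat.unpair_pair, hd, Option.casesOn, decide_eq_true_eq]
      exact hs
    have hpc : Computable₂ p := by
      apply Primrec₂.to_comp
      have hcode : Primrec fun x : (ℕ × ℕ) × List Bool =>
          F ((initSeg X k₀ ++ x.2).map Bool.toNat) :=
        hF.comp (Primrec.list_map
          (Primrec.list_append.comp (Primrec.const (initSeg X k₀)) Primrec.snd)
          (toNat_primrec.comp Primrec.snd))
      have hs : Primrec fun x : (ℕ × ℕ) × List Bool => x.1.2.unpair.2.unpair.1 :=
        Primrec.fst.comp (Primrec.unpair.comp (Primrec.snd.comp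
          (Primrec.unpair.comp (Primrec.snd.comp Primrec.fst))))
      have hm : Primrec fun x : (ℕ × ℕ) × List Bool => x.1.2.unpair.2.unpair.2 :=
        Primrec.snd.comp (Primrec.unpair.comp (Primrec.snd.comp
          (Primrec.unpair.comp (Primrec.snd.comp Primrec.fst))))
      have hn : Primrec fun x : (ℕ × ℕ) × List Bool => x.1.1 :=
        Primrec.fst.comp Primrec.fst
      exact Primrec.option_casesOn
        (Primrec.decode₂.comp (Primrec.fst.comp (Primrec.unpair.comp Primrec.snd)))
        (Primrec.const false)
        (Primrec.eq.comp (primrec_evaln.comp ((hs.pair hcode).pair hn))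
          (Primrec.option_some.comp hm)).decide
    have hpar : Partrec fun n =>
        (Nat.rfind fun t => Part.some (p n t)).map fun t => t.unpair.2.unpair.2 := by
      have h1 : Partrec₂ fun (n t : ℕ) => (Part.some (p n t) : Part Bool) := hpc.partrec₂
      exact (Partrec.rfind h1).map
        ((Primrec.snd.comp (Primrec.unpair.comp (Primrec.snd.comp
          (Primrec.unpair.comp Primrec.snd)))).to_comp).to₂
    have htot : ∀ n, charFun A n ∈
        ((Nat.rfind fun t => Part.some (p n t)).map fun t => t.unpair.2.unpair.2) := by
      intro n
      obtain ⟨t, ht⟩ := hexists n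
      have hdom : (Nat.rfind fun t => Part.some (p n t)).Dom := by
        apply Nat.rfind_dom.2
        exact ⟨t, by simp [ht], fun {_} _ => trivial⟩
      obtain ⟨t₀, ht₀⟩ := Part.dom_iff_mem.1 hdom
      have hsp : p n t₀ = true := by simpa using Nat.rfind_spec ht₀
      exact (Part.mem_map_iff _).2 ⟨t₀, ht₀, hcorrect n t₀ hsp⟩
    have hcomp : Computable (charFun A) := Partrec.of_eq_tot hpar htot
    apply hA
    show RecursiveIn (charFun fun _ => false) ↑(charFun A)
    exact partrec_recursiveIn (Partrec.nat_iff.1 hcomp.partrec)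


/-- If `A` is non-computable and `X` is 1-generic relative to
`A`, then `X` and `A` are Turing incomparable. -/
theorem oneGenericIn_incomparable (A X : ℕ → Bool) (hA : ¬ ComputableSet A)
    (hX : OneGenericIn X A) : ¬ TLE X A ∧ ¬ TLE A X :=
  ⟨fun h => (not_TLE_left hX h).elim, fun h => (not_TLE_right hA hX h).elim⟩

end KLS
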